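/- Let TM₀ be the Thue-Morse word, i.e., the fixed point beginning in 0 of the Thue-Morse morphism μ(0) = 01, μ(1) = 10 (equivalently, TM₀(n) is the parity of the number of 1's in the binary expansion of n). Then ρ^ab_{TM₀}(n) = 2 for all odd n and ρ^ab_{TM₀}(n) = 3 for all even n ≥ 2. -/

import Mathlib

/-- The factor of the infinite word `ω` of length `n` starting at position `i`. -/
def factor {A : Type*} (ω : ℕ → A) (i n : ℕ) : List A :=
  (List.range n).map fun j => ω (i + j)

/-- The abelian complexity of `ω`: the number of abelian equivalence classes of
factors of `ω` of length `n`. -/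
noncomputable def abelianComplexity {A : Type*} [DecidableEq A] (ω : ℕ → A) (n : ℕ) : ℕ :=
  Set.ncard {c : A → ℕ | ∃ i : ℕ, c = fun a => (factor ω i n).count a}

open Fin.NatCast in
/-- The Thue-Morse word: `TM n` is the parity of the number of `1`'s in the
binary expansion of `n`. -/
def TM : ℕ → Fin 2 := fun n => ((Nat.digits 2 n).count 1 : Fin 2)



lemma TM_zero : TM 0 = 0 := by simp [TM]

lemma TM_even (k : ℕ) : TM (2*k) = TM k := by
  rcases Nat.eq_zero_or_pos k with h | h
  · subst h; rfl
  · unfold TM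
    rw [Nat.digits_def' (by norm_num : (1:ℕ) < 2) (by omega)]
    simp [Nat.mul_div_cancel_left, Nat.mul_mod_right]

lemma TM_odd (k : ℕ) : TM (2*k+1) = TM k + 1 := by
  unfold TM
  rw [Nat.digits_def' (by norm_num : (1:ℕ) < 2) (by omega)]
  have h1 : (2*k+1) % 2 = 1 := by omega
  have h2 : (2*k+1) / 2 = k := by omega
  rw [h1, h2]
  simp [List.count_cons]
  apply Fin.ext
  simp only [Fin.val_add, Fin.val_natCast, Fin.val_one]
  omega

lemma TM_pow_add : ∀ t x, x < 2^t → TM (2^t + x) = TM x + 1 := by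
  intro t
  induction t with
  | zero =>
    intro x hx
    interval_cases x
    rw [TM_zero]
    show TM 1 = 0 + 1
    have := TM_odd 0
    simp [TM_zero] at this
    simpa using this
  | succ t ih =>
    intro x hx
    rcases Nat.even_or_odd x with ⟨y, hy⟩ | ⟨y, hy⟩
    · have : 2^(t+1) + x = 2*(2^t + y) := by subst hy; ring
      rw [this, TM_even, ih y (by omega), hy, ← two_mul, TM_even]
    · have : 2^(t+1) + x = 2*(2^t + y) + 1 := by subst hy; ring
      rw [this, TM_odd, ih y (by omega), hy, TM_odd]

lemma TM_pow (t : ℕ) : TM (2^t) = 1 := by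
  have := TM_pow_add t 0 (by positivity)
  simpa [TM_zero] using this

lemma TM_three_pow (t : ℕ) : TM (3 * 2^t) = 0 := by
  have h : 3 * 2^t = 2^(t+1) + 2^t := by ring
  rw [h, TM_pow_add (t+1) (2^t) (by simpa using Nat.pow_lt_pow_succ (by norm_num)), TM_pow]
  decide



def b1 (x : Fin 2) : ℕ := if x = 1 then 1 else 0
def ones (i n : ℕ) : ℕ := (factor TM i n).count 1

lemma factor_add {A : Type*} (ω : ℕ → A) (i m n : ℕ) :
    factor ω i (m+n) = factor ω i m ++ factor ω (i+m) n := by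
  unfold factor
  rw [List.range_add, List.map_append, List.map_map]
  congr 1
  apply List.map_congr_left
  intro j _
  simp
  ring_nf

lemma ones_add (i m n : ℕ) : ones i (m+n) = ones i m + ones (i+m) n := by
  unfold ones
  rw [factor_add, List.count_append]

lemma ones_one (i : ℕ) : ones i 1 = b1 (TM i) := by
  unfold ones factor b1
  rw [show List.range 1 = [0] from rfl]
  simp only [List.map_cons, List.map_nil, Nat.add_zero]
  by_cases h : TM i = 1 <;> simp [List.count_singleton', h, beq_iff_eq]





lemma ones_zero (i : ℕ) : ones i 0 = 0 := rfl

lemma b1_pair (k : ℕ) : b1 (TM (2*k)) + b1 (TM (2*k+1)) = 1 := by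
  rw [TM_even, TM_odd]
  unfold b1
  have : TM k = 0 ∨ TM k = 1 := by omega
  rcases this with h | h <;> rw [h] <;> decide

lemma ones_pair (k : ℕ) : ones (2*k) 2 = 1 := by
  rw [show (2:ℕ) = 1 + 1 from rfl, ones_add, ones_one, ones_one]
  exact b1_pair k

lemma ones_even_start : ∀ b a, ones (2*a) (2*b) = b := by
  intro b
  induction b with
  | zero => intro a; exact ones_zero _
  | succ b ih =>
    intro a
    have h : 2*(b+1) = 2 + 2*b := by ring
    rw [h, ones_add, ones_pair]
    have : 2*a + 2 = 2*(a+1) := by ring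
    rw [this, ih]
    omega

lemma b1_le (x : Fin 2) : b1 x ≤ 1 := by unfold b1; split <;> omega

-- odd length decomposition
lemma ones_odd_len_even_start (a b : ℕ) :
    ones (2*a) (2*b+1) = b + b1 (TM (2*a+2*b)) := by
  rw [ones_add, ones_even_start, ones_one]

lemma ones_odd_len_odd_start (a b : ℕ) :
    ones (2*a+1) (2*b+1) = b1 (TM (2*a+1)) + b := by
  rw [show 2*b+1 = 1 + 2*b from by ring, ones_add, ones_one]
  have : 2*a+1+1 = 2*(a+1) := by ring
  rw [this, ones_even_start]

lemma ones_even_len_odd_start (a b : ℕ) (hb : 1 ≤ b) :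
    ones (2*a+1) (2*b) = b1 (TM (2*a+1)) + (b-1) + b1 (TM (2*a+2*b)) := by
  obtain ⟨c, rfl⟩ : ∃ c, b = c + 1 := ⟨b-1, by omega⟩
  rw [show 2*(c+1) = 1 + 2*c + 1 from by ring, ones_add, ones_add, ones_one, ones_one]
  rw [show 2*a+1+1 = 2*(a+1) from by ring, ones_even_start]
  rw [show 2*a+1+(1+2*c) = 2*a+(1+2*c+1) from by ring]
  omega





lemma ones_odd_len (i b : ℕ) : ones i (2*b+1) = b ∨ ones i (2*b+1) = b + 1 := by
  rcases Nat.even_or_odd i with ⟨a, rfl⟩ | ⟨a, rfl⟩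
  · rw [show a+a = 2*a from by ring, ones_odd_len_even_start]
    have := b1_le (TM (2*a+2*b)); omega
  · rw [ones_odd_len_odd_start]
    have := b1_le (TM (2*a+1)); omega

lemma ones_even_len (i b : ℕ) (hb : 1 ≤ b) :
    ones i (2*b) = b - 1 ∨ ones i (2*b) = b ∨ ones i (2*b) = b + 1 := by
  rcases Nat.even_or_odd i with ⟨a, rfl⟩ | ⟨a, rfl⟩
  · rw [show a+a = 2*a from by ring, ones_even_start]; omega
  · rw [ones_even_len_odd_start a b hb]
    have := b1_le (TM (2*a+1)); have := b1_le (TM (2*a+2*b)); omega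

lemma TM_one : TM 1 = 1 := by
  have := TM_odd 0; rw [TM_zero] at this; simpa using this

lemma TM_three : TM 3 = 0 := by
  have := TM_odd 1; rw [TM_one] at this
  norm_num at this
  rw [this]; decide

lemma ones_odd_hi (b : ℕ) : ones 1 (2*b+1) = b + 1 := by
  have := ones_odd_len_odd_start 0 b
  simp only [Nat.mul_zero, Nat.zero_add] at this
  rw [this, TM_one]
  unfold b1; norm_num
  omega

lemma ones_odd_lo (b : ℕ) : ones 3 (2*b+1) = b := by
  have := ones_odd_len_odd_start 1 b
  norm_num at this
  rw [this, TM_three]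
  unfold b1; norm_num

-- key existence of t
lemma exists_good_t (b : ℕ) (hb : 1 ≤ b) : ∃ t, b ≤ 2^t ∧ TM (2^t - b) = 0 := by
  obtain ⟨m, hm⟩ : ∃ m, b ≤ 2^m := ⟨b, (Nat.lt_two_pow_self (n := b)).le⟩
  rcases (by omega : TM (2^m - b) = 0 ∨ TM (2^m - b) = 1) with h | h
  · exact ⟨m, hm, h⟩
  · refine ⟨m+1, by (calc b ≤ 2^m := hm
      _ ≤ 2^(m+1) := Nat.pow_le_pow_right (by norm_num) (by omega)), ?_⟩
    have hlt : 2^m - b < 2^m := by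
      have : 0 < 2^m := by positivity
      omega
    have : 2^(m+1) - b = 2^m + (2^m - b) := by
      have : 2^(m+1) = 2^m + 2^m := by ring
      omega
    rw [this, TM_pow_add m _ hlt, h]
    decide

lemma ones_even_hi (b : ℕ) (hb : 1 ≤ b) : ∃ i, ones i (2*b) = b + 1 := by
  obtain ⟨t, htb, ht⟩ := exists_good_t b hb
  set a := 2^t - b with ha
  refine ⟨2*a+1, ?_⟩
  rw [ones_even_len_odd_start a b hb, TM_odd, ht]
  have h2 : TM (2*a+2*b) = 1 := by
    rw [show 2*a+2*b = 2*(a+b) from by ring, TM_even,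
      show a + b = 2^t from by omega, TM_pow]
  rw [h2, show (0:Fin 2)+1 = 1 from rfl]
  unfold b1; norm_num
  omega

lemma ones_even_lo (b : ℕ) (hb : 1 ≤ b) : ∃ i, ones i (2*b) = b - 1 := by
  obtain ⟨t, htb, ht⟩ := exists_good_t b hb
  set a := 3 * 2^t - b with ha
  have haval : a = 2^(t+1) + (2^t - b) := by
    have : 2^(t+1) = 2^t + 2^t := by ring
    omega
  have hTa : TM a = 1 := by
    rw [haval, TM_pow_add (t+1) _ (by
      have h1 : 2^(t+1) = 2^t + 2^t := by ring
      have : 0 < 2^t := by positivity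
      omega), ht]
    decide
  refine ⟨2*a+1, ?_⟩
  rw [ones_even_len_odd_start a b hb, TM_odd, hTa]
  have h2 : TM (2*a+2*b) = 0 := by
    rw [show 2*a+2*b = 2*(a+b) from by ring, TM_even,
      show a + b = 3 * 2^t from by omega, TM_three_pow]
  rw [h2, show (1:Fin 2)+1 = 0 from rfl]
  unfold b1; norm_num




def cf (n v : ℕ) : Fin 2 → ℕ := fun a => if a = 1 then v else n - v

lemma cf_inj {n v w : ℕ} (h : cf n v = cf n w) : v = w := by
  have := congrFun h 1
  simpa [cf] using this

lemma count_fin2 (l : List (Fin 2)) : l.count 0 + l.count 1 = l.length := by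
  induction l with
  | nil => simp
  | cons a l ih =>
    fin_cases a <;> simp [List.count_cons] <;> omega

lemma factor_count_eq (i n : ℕ) :
    (fun a => (factor TM i n).count a) = cf n (ones i n) := by
  funext a
  have hlen : (factor TM i n).length = n := by simp [factor]
  have hsum := count_fin2 (factor TM i n)
  fin_cases a
  · show (factor TM i n).count 0 = cf n (ones i n) 0
    simp only [cf, ones]
    norm_num
    omega
  · show (factor TM i n).count 1 = cf n (ones i n) 1
    simp [cf, ones]

lemma set_odd (b : ℕ) :
    {c : Fin 2 → ℕ | ∃ i : ℕ, c = fun a => (factor TM i (2*b+1)).count a}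
      = {cf (2*b+1) b, cf (2*b+1) (b+1)} := by
  ext c
  constructor
  · rintro ⟨i, rfl⟩
    rw [factor_count_eq]
    rcases ones_odd_len i b with h | h <;> rw [h]
    · left; rfl
    · right; rfl
  · rintro (rfl | rfl)
    · exact ⟨3, by rw [factor_count_eq, ones_odd_lo]⟩
    · exact ⟨1, by rw [factor_count_eq, ones_odd_hi]⟩

lemma set_even (b : ℕ) (hb : 1 ≤ b) :
    {c : Fin 2 → ℕ | ∃ i : ℕ, c = fun a => (factor TM i (2*b)).count a}
      = {cf (2*b) (b-1), cf (2*b) b, cf (2*b) (b+1)} := by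
  ext c
  constructor
  · rintro ⟨i, rfl⟩
    rw [factor_count_eq]
    rcases ones_even_len i b hb with h | h | h <;> rw [h]
    · left; rfl
    · right; left; rfl
    · right; right; rfl
  · rintro (rfl | rfl | rfl)
    · obtain ⟨i, hi⟩ := ones_even_lo b hb
      exact ⟨i, by rw [factor_count_eq, hi]⟩
    · exact ⟨0, by have := ones_even_start b 0; simp at this ⊢; rw [factor_count_eq]; norm_num [this]⟩
    · obtain ⟨i, hi⟩ := ones_even_hi b hb
      exact ⟨i, by rw [factor_count_eq, hi]⟩

/-- The abelian complexity of the Thue-Morse word is `2` at odd lengths and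
`3` at even lengths `≥ 2`. -/
theorem abelianComplexity_thueMorse :
    (∀ n : ℕ, Odd n → abelianComplexity TM n = 2) ∧
    (∀ n : ℕ, Even n → 2 ≤ n → abelianComplexity TM n = 3) := by
  constructor
  · intro n hn
    obtain ⟨b, rfl⟩ := hn
    unfold abelianComplexity
    rw [set_odd]
    exact Set.ncard_pair (fun h => by have := cf_inj h; omega)
  · intro n hn h2
    obtain ⟨b, rfl⟩ := hn
    have hb : 1 ≤ b := by omega
    unfold abelianComplexity
    rw [show b + b = 2*b from by ring, set_even b hb]
    rw [Set.ncard_insert_of_notMem ?h1 ?h2, Set.ncard_pair ?h3]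
    case h1 =>
      rintro (h | h) <;> have := cf_inj h <;> omega
    case h2 =>
      exact (Set.finite_singleton _).insert _
    case h3 =>
      intro h; have := cf_inj h; omega
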